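/- (Zhang-type criterion, the case θ = π) Let N_A, N_B ≥ 2 and let ρ be a separable bipartite density matrix on (Fin N_A × Fin N_B), with marginals ρ_A, ρ_B. Then ‖RM( ρ − ρ_A ⊗ₖ ρ_B )‖_tr ≤ √( (1 − tr(ρ_A²)) · (1 − tr(ρ_B²)) ). -/

import Mathlib

open Matrix Kronecker Complex ComplexOrder

noncomputable def traceNorm {m n : Type*} [Fintype m] [Fintype n] [DecidableEq n]
    (M : Matrix m n ℂ) : ℝ :=
  (((Matrix.posSemidef_conjTranspose_mul_self M).1.eigenvectorUnitary : Matrix n n ℂ) *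
    diagonal (((↑) : ℝ → ℂ) ∘ (√·) ∘ (Matrix.posSemidef_conjTranspose_mul_self M).1.eigenvalues) *
    (star (Matrix.posSemidef_conjTranspose_mul_self M).1.eigenvectorUnitary : Matrix n n ℂ)).trace.re

def realign {NA NB : ℕ} (ρ : Matrix (Fin NA × Fin NB) (Fin NA × Fin NB) ℂ) :
    Matrix (Fin NA × Fin NA) (Fin NB × Fin NB) ℂ :=
  fun p q => ρ (p.1, q.1) (p.2, q.2)

def IsDensityMatrix {n : Type*} [Fintype n] (ρ : Matrix n n ℂ) : Prop :=
  ρ.PosSemidef ∧ ρ.trace = 1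

noncomputable def hsNorm {m n : Type*} [Fintype m] [Fintype n] (M : Matrix m n ℂ) : ℝ :=
  Real.sqrt (∑ i, ∑ j, ‖M i j‖ ^ 2)

noncomputable def hsInner {m n : Type*} [Fintype m] [Fintype n] (X Y : Matrix m n ℂ) : ℂ :=
  (Xᴴ * Y).trace

noncomputable def marginalA {NA NB : ℕ} (ρ : Matrix (Fin NA × Fin NB) (Fin NA × Fin NB) ℂ) :
    Matrix (Fin NA) (Fin NA) ℂ :=
  fun m n => ∑ μ, ρ (m, μ) (n, μ)

noncomputable def marginalB {NA NB : ℕ} (ρ : Matrix (Fin NA × Fin NB) (Fin NA × Fin NB) ℂ) :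
    Matrix (Fin NB) (Fin NB) ℂ :=
  fun μ ν => ∑ m, ρ (m, μ) (m, ν)

def SeparableState {NA NB : ℕ} (ρ : Matrix (Fin NA × Fin NB) (Fin NA × Fin NB) ℂ) : Prop :=
  ∃ (ι : Type) (s : Finset ι) (p : ι → ℝ)
    (ρA : ι → Matrix (Fin NA) (Fin NA) ℂ) (ρB : ι → Matrix (Fin NB) (Fin NB) ℂ),
    (∀ i ∈ s, 0 < p i) ∧ (∑ i ∈ s, p i = 1) ∧
    (∀ i ∈ s, IsDensityMatrix (ρA i)) ∧ (∀ i ∈ s, IsDensityMatrix (ρB i)) ∧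
    ρ = ∑ i ∈ s, (p i : ℂ) • (ρA i ⊗ₖ ρB i)

noncomputable def l2OpNorm {n : Type*} [Fintype n] [DecidableEq n] (M : Matrix n n ℂ) : ℝ :=
  ‖Matrix.toEuclideanCLM (𝕜 := ℂ) (n := n) M‖

noncomputable def n2 {I : Type*} [Fintype I] (v : I → ℂ) : ℝ := ∑ i, ‖v i‖ ^ 2

lemma n2_nonneg {I : Type*} [Fintype I] (v : I → ℂ) : 0 ≤ n2 v :=
  Finset.sum_nonneg fun _ _ => by positivity

lemma dot_star_self_re {I : Type*} [Fintype I] (v : I → ℂ) : (star v ⬝ᵥ v).re = n2 v := by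
  simp only [dotProduct, Pi.star_apply, RCLike.star_def, n2]
  rw [Complex.re_sum]
  refine Finset.sum_congr rfl fun i _ => ?_
  rw [mul_comm, Complex.mul_conj]
  simp [Complex.sq_norm, ← Complex.normSq_eq_norm_sq]

lemma abs_dot_le {I : Type*} [Fintype I] (a b : I → ℂ) :
    ‖a ⬝ᵥ b‖ ≤ Real.sqrt (n2 a) * Real.sqrt (n2 b) := by
  refine (norm_sum_le _ _).trans ?_
  refine le_trans (Finset.sum_le_sum (fun i _ => (norm_mul_le (a i) (b i)))) ?_
  simpa [n2] using Real.sum_mul_le_sqrt_mul_sqrt Finset.univ (fun i => ‖a i‖) (fun i => ‖b i‖)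

lemma n2_star {I : Type*} [Fintype I] (v : I → ℂ) : n2 (star v) = n2 v := by
  simp [n2]

lemma quad_eq {I J : Type*} [Fintype I] [Fintype J] (A : Matrix I J ℂ) (z : J → ℂ) :
    star z ⬝ᵥ ((Aᴴ * A) *ᵥ z) = star (A *ᵥ z) ⬝ᵥ (A *ᵥ z) := by
  rw [← mulVec_mulVec, dotProduct_mulVec, ← star_mulVec]

lemma n2_mulVec {I J : Type*} [Fintype I] [Fintype J] (A : Matrix I J ℂ) (z : J → ℂ) :
    n2 (A *ᵥ z) = (star z ⬝ᵥ ((Aᴴ * A) *ᵥ z)).re := by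
  rw [quad_eq, dot_star_self_re]

section dual
variable {I J : Type*} [Fintype I] [Fintype J] [DecidableEq I] [DecidableEq J]

lemma exists_dual_matrix (M : Matrix I J ℂ) :
    ∃ U : Matrix I J ℂ, (∀ x : I → ℂ, n2 (Uᴴ *ᵥ x) ≤ n2 x) ∧
      ((Uᴴ * M).trace).re = traceNorm M := by
  have hH := Matrix.posSemidef_conjTranspose_mul_self M
  set hHer := hH.1 with hHerdef
  set V : Matrix J J ℂ := (hHer.eigenvectorUnitary : Matrix J J ℂ) with hVdef
  set d : J → ℝ := hHer.eigenvalues with hddef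
  have hdnn : ∀ j, 0 ≤ d j := fun j => hH.eigenvalues_nonneg j
  have hV1 : star V * V = 1 := Matrix.mem_unitaryGroup_iff'.mp hHer.eigenvectorUnitary.2
  have hV2 : V * star V = 1 := Matrix.mem_unitaryGroup_iff.mp hHer.eigenvectorUnitary.2
  have hspec : Mᴴ * M = V * diagonal (RCLike.ofReal ∘ d) * star V := hHer.spectral_theorem
  have mulmul : ∀ c e : J → ℂ, (V * diagonal c * star V) * (V * diagonal e * star V)
      = V * diagonal (fun j => c j * e j) * star V := by
    intro c e
    have : star V * (V * diagonal e * star V) = diagonal e * star V := by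
      rw [← mul_assoc, ← mul_assoc, hV1, one_mul]
    rw [mul_assoc (V * diagonal c), this, ← mul_assoc, mul_assoc V, diagonal_mul_diagonal]
  have htr : ∀ c : J → ℂ, (V * diagonal c * star V).trace = ∑ j, c j := by
    intro c
    rw [trace_mul_cycle, hV1, one_mul, trace_diagonal]
  -- the "inverse sqrt" diagonal
  set g : J → ℂ := fun j => ((Real.sqrt (d j))⁻¹ : ℝ) with hgdef
  set S : Matrix J J ℂ := V * diagonal g * star V with hSdef
  have hSH : Sᴴ = S := by
    have hg : star g = g := by
      funext j; simp [hgdef]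
    simp [hSdef, Matrix.star_eq_conjTranspose, conjTranspose_mul, diagonal_conjTranspose, hg,
      mul_assoc]
  -- quadratic form bound for conjugated real diagonal matrices
  have key : ∀ (c : J → ℝ), (∀ j, 0 ≤ c j) → (∀ j, c j ≤ 1) → ∀ x : J → ℂ,
      (star x ⬝ᵥ ((V * diagonal (fun j => (c j : ℂ)) * star V) *ᵥ x)).re ≤ n2 x := by
    intro c hc0 hc1 x
    set y := star V *ᵥ x with hy
    have hsy : star y = star x ᵥ* V := by
      rw [hy, star_mulVec, Matrix.star_eq_conjTranspose, conjTranspose_conjTranspose]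
    have h1 : (V * diagonal (fun j => (c j : ℂ)) * star V) *ᵥ x
        = V *ᵥ (diagonal (fun j => (c j : ℂ)) *ᵥ y) := by
      rw [← mulVec_mulVec, ← mulVec_mulVec]
    have h2 : star x ⬝ᵥ (V *ᵥ (diagonal (fun j => (c j : ℂ)) *ᵥ y))
        = star y ⬝ᵥ (diagonal (fun j => (c j : ℂ)) *ᵥ y) := by
      rw [dotProduct_mulVec, ← hsy]
    have hn2y : n2 y = n2 x := by
      rw [← dot_star_self_re, ← dot_star_self_re (v := x)]
      rw [hsy, ← dotProduct_mulVec, mulVec_mulVec, hV2, one_mulVec]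
    have h3 : (star y ⬝ᵥ (diagonal (fun j => (c j : ℂ)) *ᵥ y)).re
        = ∑ j, c j * ‖y j‖ ^ 2 := by
      simp only [dotProduct, mulVec_diagonal, Pi.star_apply, RCLike.star_def]
      rw [Complex.re_sum]
      refine Finset.sum_congr rfl fun j _ => ?_
      have : (starRingEnd ℂ) (y j) * ((c j : ℂ) * y j)
          = ((c j : ℝ) : ℂ) * ((Complex.normSq (y j) : ℝ) : ℂ) := by
        rw [Complex.normSq_eq_conj_mul_self]
        ring
      rw [this, ← Complex.ofReal_mul]
      simp [Complex.normSq_eq_norm_sq, ← Complex.ofReal_pow]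
    rw [h1, h2]
    rw [h3, ← hn2y]
    refine Finset.sum_le_sum fun j _ => ?_
    have := hc1 j
    nlinarith [sq_nonneg ‖y j‖]
  -- computations of products
  have hUHM : (M * S)ᴴ * M
      = V * diagonal (fun j => g j * RCLike.ofReal (d j)) * star V := by
    rw [conjTranspose_mul, hSH, Matrix.mul_assoc S Mᴴ M, hspec, hSdef, mulmul]
    simp [Function.comp]
  have hUHU : (M * S)ᴴ * (M * S)
      = V * diagonal (fun j => g j * RCLike.ofReal (d j) * g j) * star V := by
    rw [conjTranspose_mul, hSH, Matrix.mul_assoc S Mᴴ (M * S), ← Matrix.mul_assoc Mᴴ M S,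
      ← Matrix.mul_assoc S (Mᴴ * M) S, hspec, hSdef, mulmul, mulmul]
    simp [Function.comp]
  -- U is a contraction
  have hUcon : ∀ z : J → ℂ, n2 ((M * S) *ᵥ z) ≤ n2 z := by
    intro z
    rw [n2_mulVec, hUHU]
    have hcoe : (fun j => g j * RCLike.ofReal (d j) * g j)
        = fun j => ((((Real.sqrt (d j))⁻¹ ^ 2 * d j : ℝ)) : ℂ) := by
      funext j
      simp only [hgdef, show (RCLike.ofReal : ℝ → ℂ) = Complex.ofReal from rfl]
      push_cast
      ring
    rw [hcoe]
    refine key _ (fun j => mul_nonneg (by positivity) (hdnn j)) (fun j => ?_) z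
    rcases eq_or_lt_of_le (hdnn j) with h | h
    · simp [← h]
    · rw [inv_pow, Real.sq_sqrt (hdnn j), inv_mul_cancel₀ (ne_of_gt h)]
  refine ⟨M * S, ?_, ?_⟩
  · -- adjoint contraction via Cauchy-Schwarz trick
    intro x
    set z := (M * S)ᴴ *ᵥ x with hz
    have h1 : star z ⬝ᵥ z = star ((M * S) *ᵥ z) ⬝ᵥ x := by
      conv_lhs => rw [hz]
      rw [dotProduct_mulVec, ← star_mulVec]
    have h2 : (star z ⬝ᵥ z).re ≤ Real.sqrt (n2 ((M * S) *ᵥ z)) * Real.sqrt (n2 x) := by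
      rw [h1]
      refine (Complex.re_le_norm _).trans ?_
      simpa [n2_star] using abs_dot_le (star ((M * S) *ᵥ z)) x
    have h3 : n2 z ≤ Real.sqrt (n2 z) * Real.sqrt (n2 x) := by
      conv_lhs => rw [← dot_star_self_re z]
      exact h2.trans (mul_le_mul_of_nonneg_right (Real.sqrt_le_sqrt (hUcon z))
        (Real.sqrt_nonneg _))
    have a2 := Real.sq_sqrt (n2_nonneg z)
    have b2 := Real.sq_sqrt (n2_nonneg x)
    nlinarith [Real.sqrt_nonneg (n2 z), Real.sqrt_nonneg (n2 x)]
  · -- trace value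
    have hr : ∀ j, (Real.sqrt (d j))⁻¹ * d j = Real.sqrt (d j) := by
      intro j
      rw [inv_mul_eq_div, Real.div_sqrt]
    have hgd : ∀ j, g j * RCLike.ofReal (d j) = ((Real.sqrt (d j) : ℝ) : ℂ) := by
      intro j
      simp only [hgdef, show (RCLike.ofReal : ℝ → ℂ) = Complex.ofReal from rfl]
      rw [← Complex.ofReal_mul, hr j]
    have htn : traceNorm M
        = ((V * diagonal ((RCLike.ofReal : ℝ → ℂ) ∘ Real.sqrt ∘ d) * star V).trace).re := rfl
    rw [hUHM, htr, htn, htr]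
    simp only [Function.comp_apply]
    rw [Finset.sum_congr rfl (fun j _ => hgd j)]
    norm_cast
end dual

section pieces
variable {I J : Type*} [Fintype I] [Fintype J] [DecidableEq I] [DecidableEq J]

lemma dual_rankone (U : Matrix I J ℂ) (hU : ∀ x : I → ℂ, n2 (Uᴴ *ᵥ x) ≤ n2 x)
    (x : I → ℂ) (y : J → ℂ) :
    ((Uᴴ * Matrix.of (fun a b => x a * y b)).trace).re
      ≤ Real.sqrt (n2 x) * Real.sqrt (n2 y) := by
  have htr : (Uᴴ * Matrix.of (fun a b => x a * y b)).trace = (Uᴴ *ᵥ x) ⬝ᵥ y := by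
    simp only [Matrix.trace, Matrix.diag, Matrix.mul_apply, Matrix.of_apply, dotProduct, mulVec,
      Finset.sum_mul]
    exact Finset.sum_congr rfl fun b _ => Finset.sum_congr rfl fun a _ => by ring
  rw [htr]
  refine (Complex.re_le_norm _).trans ?_
  refine (abs_dot_le _ _).trans ?_
  exact mul_le_mul_of_nonneg_right (Real.sqrt_le_sqrt (hU x)) (Real.sqrt_nonneg _)

lemma n2_flatten {n : Type*} [Fintype n] (X : Matrix n n ℂ) (hX : X.IsHermitian) :
    n2 (fun p : n × n => X p.1 p.2) = ((X * X).trace).re := by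
  simp only [n2, Matrix.trace, Matrix.diag, Matrix.mul_apply, Complex.re_sum,
    Fintype.sum_prod_type]
  refine Finset.sum_congr rfl fun m _ => Finset.sum_congr rfl fun k _ => ?_
  rw [← hX.apply m k, RCLike.star_def, ← Complex.normSq_eq_conj_mul_self]
  simp [Complex.normSq_eq_norm_sq, ← Complex.ofReal_pow]

lemma conj_diag_mul {n : Type*} [Fintype n] [DecidableEq n] (V : Matrix n n ℂ)
    (hV1 : star V * V = 1) (c e : n → ℂ) :
    (V * diagonal c * star V) * (V * diagonal e * star V)
      = V * diagonal (fun j => c j * e j) * star V := by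
  have h : star V * (V * diagonal e * star V) = diagonal e * star V := by
    rw [← Matrix.mul_assoc, ← Matrix.mul_assoc, hV1, one_mul]
  rw [Matrix.mul_assoc (V * diagonal c), h, ← Matrix.mul_assoc, Matrix.mul_assoc V,
    diagonal_mul_diagonal]

lemma trace_conj_diag {n : Type*} [Fintype n] [DecidableEq n] (V : Matrix n n ℂ)
    (hV : star V * V = 1) (c : n → ℂ) :
    (V * diagonal c * star V).trace = ∑ j, c j := by
  rw [trace_mul_cycle, hV, one_mul, trace_diagonal]

lemma purity {n : Type*} [Fintype n] [DecidableEq n] {A : Matrix n n ℂ}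
    (hA : A.PosSemidef) (ht : A.trace = 1) : ((A * A).trace).re ≤ 1 := by
  set hHer := hA.1 with hHerdef
  set V : Matrix n n ℂ := (hHer.eigenvectorUnitary : Matrix n n ℂ) with hVdef
  set d : n → ℝ := hHer.eigenvalues with hddef
  have hV1 : star V * V = 1 := Matrix.mem_unitaryGroup_iff'.mp hHer.eigenvectorUnitary.2
  have hspec : A = V * diagonal (RCLike.ofReal ∘ d) * star V := hHer.spectral_theorem
  have h1 : A.trace = ∑ j, ((d j : ℝ) : ℂ) := by
    conv_lhs => rw [hspec]
    rw [trace_conj_diag V hV1]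
    rfl
  have hsum : ∑ j, d j = 1 := by
    have := congrArg Complex.re h1
    rw [ht] at this
    rw [Complex.re_sum] at this
    simpa using this.symm
  have hAA : A * A = V * diagonal (fun j => ((d j : ℝ) : ℂ) * ((d j : ℝ) : ℂ)) * star V := by
    conv_lhs => rw [hspec]
    rw [conj_diag_mul V hV1]
    simp [Function.comp]
  rw [hAA, trace_conj_diag V hV1]
  have : (∑ j, ((d j : ℝ) : ℂ) * ((d j : ℝ) : ℂ)).re = ∑ j, d j ^ 2 := by
    rw [Complex.re_sum]
    refine Finset.sum_congr rfl fun j _ => ?_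
    rw [← Complex.ofReal_mul]
    simp [sq]
  rw [this]
  calc ∑ j, d j ^ 2 ≤ (∑ j, d j) ^ 2 :=
        Finset.sum_sq_le_sq_sum_of_nonneg fun j _ => hA.eigenvalues_nonneg j
    _ = 1 := by rw [hsum]; norm_num
end pieces



lemma sum_centered {ι : Type*} (s : Finset ι) (q a b : ι → ℂ) (hq : ∑ i ∈ s, q i = 1) :
    ∑ i ∈ s, q i * ((a i - ∑ j ∈ s, q j * a j) * (b i - ∑ j ∈ s, q j * b j))
      = ∑ i ∈ s, q i * (a i * b i) - (∑ j ∈ s, q j * a j) * (∑ j ∈ s, q j * b j) := by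
  set sa := ∑ j ∈ s, q j * a j with hsa
  set sb := ∑ j ∈ s, q j * b j with hsb
  have h : ∀ i ∈ s, q i * ((a i - sa) * (b i - sb))
      = q i * (a i * b i) - (q i * a i) * sb - sa * (q i * b i) + q i * (sa * sb) := by
    intro i _; ring
  rw [Finset.sum_congr rfl h]
  rw [Finset.sum_add_distrib, Finset.sum_sub_distrib, Finset.sum_sub_distrib,
    ← Finset.sum_mul, ← Finset.mul_sum, ← Finset.sum_mul, hq, ← hsa, ← hsb]
  ring

lemma trace_weighted {n ι : Type*} [Fintype n] (s : Finset ι) (p : ι → ℝ)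
    (A : ι → Matrix n n ℂ) (P : Matrix n n ℂ) (hP : P = ∑ i ∈ s, (p i : ℂ) • A i)
    (hq : ∑ i ∈ s, (p i : ℂ) = 1) :
    ∑ i ∈ s, (p i : ℂ) * ((A i - P) * (A i - P)).trace
      = ∑ i ∈ s, (p i : ℂ) * (A i * A i).trace - (P * P).trace := by
  have expand : ∀ i ∈ s, (p i : ℂ) * ((A i - P) * (A i - P)).trace
      = (p i : ℂ) * (A i * A i).trace - (p i : ℂ) * (A i * P).trace
        - (p i : ℂ) * (P * A i).trace + (p i : ℂ) * (P * P).trace := by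
    intro i _
    rw [sub_mul, mul_sub, mul_sub, Matrix.trace_sub, Matrix.trace_sub, Matrix.trace_sub]
    ring
  rw [Finset.sum_congr rfl expand, Finset.sum_add_distrib, Finset.sum_sub_distrib,
    Finset.sum_sub_distrib]
  have h1 : ∑ i ∈ s, (p i : ℂ) * (A i * P).trace = (P * P).trace := by
    have e : ∀ i ∈ s, (p i : ℂ) * (A i * P).trace = (((p i : ℂ) • A i) * P).trace := by
      intro i _; rw [Matrix.smul_mul, Matrix.trace_smul, smul_eq_mul]
    rw [Finset.sum_congr rfl e, ← Matrix.trace_sum, ← Matrix.sum_mul, ← hP]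
  have h2 : ∑ i ∈ s, (p i : ℂ) * (P * A i).trace = (P * P).trace := by
    have e : ∀ i ∈ s, (p i : ℂ) * (P * A i).trace = ((P * ((p i : ℂ) • A i))).trace := by
      intro i _; rw [Matrix.mul_smul, Matrix.trace_smul, smul_eq_mul]
    rw [Finset.sum_congr rfl e, ← Matrix.trace_sum, ← Matrix.mul_sum, ← hP]
  have h3 : ∑ i ∈ s, (p i : ℂ) * (P * P).trace = (P * P).trace := by
    rw [← Finset.sum_mul, hq, one_mul]
  rw [h1, h2, h3]
  ring

set_option maxHeartbeats 1000000 in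
theorem zhang_criterion
    (NA NB : ℕ) (hNA : 2 ≤ NA) (hNB : 2 ≤ NB)
    (ρ : Matrix (Fin NA × Fin NB) (Fin NA × Fin NB) ℂ)
    (hρ : IsDensityMatrix ρ) (hsep : SeparableState ρ) :
    traceNorm (realign (ρ - marginalA ρ ⊗ₖ marginalB ρ)) ≤
      Real.sqrt ((1 - ((marginalA ρ * marginalA ρ).trace).re)
        * (1 - ((marginalB ρ * marginalB ρ).trace).re)) := by
  classical
  obtain ⟨ι, s, p, A, B, hp, hps, hDA, hDB, hρeq⟩ := hsep
  have hq : ∑ i ∈ s, (p i : ℂ) = 1 := by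
    rw [← Complex.ofReal_sum, hps, Complex.ofReal_one]
  -- marginals
  have hPA : marginalA ρ = ∑ i ∈ s, (p i : ℂ) • A i := by
    ext m k
    simp only [marginalA, Matrix.sum_apply, Matrix.smul_apply, smul_eq_mul]
    rw [hρeq]
    simp only [Matrix.sum_apply, Matrix.smul_apply, kroneckerMap_apply, smul_eq_mul]
    rw [Finset.sum_comm]
    refine Finset.sum_congr rfl fun i hi => ?_
    have ht : (∑ μ, (B i) μ μ) = 1 := by
      simpa [Matrix.trace, Matrix.diag] using (hDB i hi).2
    rw [← Finset.mul_sum, ← Finset.mul_sum, ht, mul_one]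
  have hPB : marginalB ρ = ∑ i ∈ s, (p i : ℂ) • B i := by
    ext μ ν
    simp only [marginalB, Matrix.sum_apply, Matrix.smul_apply, smul_eq_mul]
    rw [hρeq]
    simp only [Matrix.sum_apply, Matrix.smul_apply, kroneckerMap_apply, smul_eq_mul]
    rw [Finset.sum_comm]
    refine Finset.sum_congr rfl fun i hi => ?_
    have ht : (∑ m, (A i) m m) = 1 := by
      simpa [Matrix.trace, Matrix.diag] using (hDA i hi).2
    rw [← Finset.mul_sum, ← Finset.sum_mul, ht, one_mul]
  -- decomposition into rank-one pieces
  have hdec : realign (ρ - marginalA ρ ⊗ₖ marginalB ρ) = ∑ i ∈ s, (p i : ℂ) •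
      Matrix.of (fun (a : Fin NA × Fin NA) (b : Fin NB × Fin NB) =>
        (A i - marginalA ρ) a.1 a.2 * (B i - marginalB ρ) b.1 b.2) := by
    ext a b
    obtain ⟨m, k⟩ := a; obtain ⟨μ, ν⟩ := b
    show (ρ - marginalA ρ ⊗ₖ marginalB ρ) (m, μ) (k, ν) = _
    rw [Matrix.sub_apply, hPA, hPB]
    conv_lhs => rw [hρeq]
    simp only [kroneckerMap_apply, Matrix.sum_apply, Matrix.smul_apply, Matrix.sub_apply,
      Matrix.of_apply, smul_eq_mul]
    exact (sum_centered s (fun i => (p i : ℂ)) (fun i => A i m k) (fun i => B i μ ν) hq).symm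
  -- hermitian marginals and differences
  have hPAH : (marginalA ρ).IsHermitian := by
    rw [hPA]
    unfold Matrix.IsHermitian
    rw [Matrix.conjTranspose_sum]
    refine Finset.sum_congr rfl fun i hi => ?_
    rw [Matrix.conjTranspose_smul, (hDA i hi).1.1]
    simp [Complex.conj_ofReal]
  have hPBH : (marginalB ρ).IsHermitian := by
    rw [hPB]
    unfold Matrix.IsHermitian
    rw [Matrix.conjTranspose_sum]
    refine Finset.sum_congr rfl fun i hi => ?_
    rw [Matrix.conjTranspose_smul, (hDB i hi).1.1]
    simp [Complex.conj_ofReal]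
  -- the vectors
  set x : ι → (Fin NA × Fin NA) → ℂ :=
    fun i a => (A i - marginalA ρ) a.1 a.2 with hxdef
  set y : ι → (Fin NB × Fin NB) → ℂ :=
    fun i b => (B i - marginalB ρ) b.1 b.2 with hydef
  -- second-moment bounds
  have hSA : ∑ i ∈ s, p i * n2 (x i) ≤ 1 - ((marginalA ρ * marginalA ρ).trace).re := by
    have e1 : ∀ i ∈ s, p i * n2 (x i)
        = (((p i : ℂ)) * (((A i - marginalA ρ) * (A i - marginalA ρ)).trace)).re := by
      intro i hi
      rw [hxdef, n2_flatten _ (((hDA i hi).1.1).sub hPAH), Complex.re_ofReal_mul]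
    rw [Finset.sum_congr rfl e1, ← Complex.re_sum,
      trace_weighted s p A (marginalA ρ) hPA hq]
    have e2 : (∑ i ∈ s, (p i : ℂ) * (A i * A i).trace
        - (marginalA ρ * marginalA ρ).trace).re
        = (∑ i ∈ s, p i * ((A i * A i).trace).re)
          - ((marginalA ρ * marginalA ρ).trace).re := by
      rw [Complex.sub_re, Complex.re_sum]
      congr 1
      exact Finset.sum_congr rfl fun i _ => Complex.re_ofReal_mul _ _
    rw [e2]
    have e3 : ∑ i ∈ s, p i * ((A i * A i).trace).re ≤ 1 := by
      calc ∑ i ∈ s, p i * ((A i * A i).trace).re ≤ ∑ i ∈ s, p i := by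
            refine Finset.sum_le_sum fun i hi => ?_
            have := purity (hDA i hi).1 (hDA i hi).2
            nlinarith [(hp i hi).le]
        _ = 1 := hps
    linarith
  have hSB : ∑ i ∈ s, p i * n2 (y i) ≤ 1 - ((marginalB ρ * marginalB ρ).trace).re := by
    have e1 : ∀ i ∈ s, p i * n2 (y i)
        = (((p i : ℂ)) * (((B i - marginalB ρ) * (B i - marginalB ρ)).trace)).re := by
      intro i hi
      rw [hydef, n2_flatten _ (((hDB i hi).1.1).sub hPBH), Complex.re_ofReal_mul]
    rw [Finset.sum_congr rfl e1, ← Complex.re_sum,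
      trace_weighted s p B (marginalB ρ) hPB hq]
    have e2 : (∑ i ∈ s, (p i : ℂ) * (B i * B i).trace
        - (marginalB ρ * marginalB ρ).trace).re
        = (∑ i ∈ s, p i * ((B i * B i).trace).re)
          - ((marginalB ρ * marginalB ρ).trace).re := by
      rw [Complex.sub_re, Complex.re_sum]
      congr 1
      exact Finset.sum_congr rfl fun i _ => Complex.re_ofReal_mul _ _
    rw [e2]
    have e3 : ∑ i ∈ s, p i * ((B i * B i).trace).re ≤ 1 := by
      calc ∑ i ∈ s, p i * ((B i * B i).trace).re ≤ ∑ i ∈ s, p i := by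
            refine Finset.sum_le_sum fun i hi => ?_
            have := purity (hDB i hi).1 (hDB i hi).2
            nlinarith [(hp i hi).le]
        _ = 1 := hps
    linarith
  have hSAnn : 0 ≤ ∑ i ∈ s, p i * n2 (x i) :=
    Finset.sum_nonneg fun i hi => mul_nonneg (hp i hi).le (n2_nonneg _)
  have hSBnn : 0 ≤ ∑ i ∈ s, p i * n2 (y i) :=
    Finset.sum_nonneg fun i hi => mul_nonneg (hp i hi).le (n2_nonneg _)
  -- dual matrix
  obtain ⟨U, hUc, hUtr⟩ := exists_dual_matrix (realign (ρ - marginalA ρ ⊗ₖ marginalB ρ))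
  rw [← hUtr]
  have hsplit : ((Uᴴ * realign (ρ - marginalA ρ ⊗ₖ marginalB ρ)).trace).re
      = ∑ i ∈ s, p i * ((Uᴴ * Matrix.of (fun a b => x i a * y i b)).trace).re := by
    rw [hdec, Matrix.mul_sum, Matrix.trace_sum, Complex.re_sum]
    refine Finset.sum_congr rfl fun i hi => ?_
    rw [Matrix.mul_smul, Matrix.trace_smul]
    exact Complex.re_ofReal_mul _ _
  rw [hsplit]
  -- Cauchy-Schwarz over the ensemble
  have step1 : ∑ i ∈ s, p i * ((Uᴴ * Matrix.of (fun a b => x i a * y i b)).trace).re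
      ≤ ∑ i ∈ s, Real.sqrt (p i * n2 (x i)) * Real.sqrt (p i * n2 (y i)) := by
    refine Finset.sum_le_sum fun i hi => ?_
    have hb := dual_rankone U hUc (x i) (y i)
    have hpnn := (hp i hi).le
    have e : Real.sqrt (p i * n2 (x i)) * Real.sqrt (p i * n2 (y i))
        = p i * (Real.sqrt (n2 (x i)) * Real.sqrt (n2 (y i))) := by
      rw [Real.sqrt_mul hpnn, Real.sqrt_mul hpnn,
        show Real.sqrt (p i) * Real.sqrt (n2 (x i)) * (Real.sqrt (p i) * Real.sqrt (n2 (y i)))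
          = (Real.sqrt (p i) * Real.sqrt (p i)) * (Real.sqrt (n2 (x i)) * Real.sqrt (n2 (y i)))
          from by ring, Real.mul_self_sqrt hpnn]
    rw [e]
    exact mul_le_mul_of_nonneg_left hb hpnn
  have step2 : ∑ i ∈ s, Real.sqrt (p i * n2 (x i)) * Real.sqrt (p i * n2 (y i))
      ≤ Real.sqrt (∑ i ∈ s, p i * n2 (x i)) * Real.sqrt (∑ i ∈ s, p i * n2 (y i)) := by
    have := Real.sum_mul_le_sqrt_mul_sqrt s
      (fun i => Real.sqrt (p i * n2 (x i))) (fun i => Real.sqrt (p i * n2 (y i)))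
    rw [Finset.sum_congr rfl (fun i hi =>
        Real.sq_sqrt (mul_nonneg (hp i hi).le (n2_nonneg _))),
      Finset.sum_congr rfl (fun i hi =>
        Real.sq_sqrt (mul_nonneg (hp i hi).le (n2_nonneg _)))] at this
    exact this
  refine (step1.trans step2).trans ?_
  rw [← Real.sqrt_mul hSAnn]
  refine Real.sqrt_le_sqrt ?_
  exact mul_le_mul hSA hSB hSBnn (by linarith)
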